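/- If g(U) = vec(U)ᵀ(C ⊗ C)vec(U) is convex on U(h,h), then the function F(T) = E(C, C̄(T), T) is concave on the interior set U̇_n(h) = {T ∈ U_n(h) : Tᵀ1_N > 0 entrywise}; equivalently, f(T) = ∑_{k,l}(T_{:,k}ᵀCT_{:,l})²/(h̄_k h̄_l) is convex there. -/

import Mathlib

open Matrix BigOperators Kronecker

noncomputable def GWEnergy {N n : ℕ} (C : Matrix (Fin N) (Fin N) ℝ)
    (D : Matrix (Fin n) (Fin n) ℝ) (T : Matrix (Fin N) (Fin n) ℝ) : ℝ :=
  ∑ i, ∑ j, ∑ k, ∑ l, (C i j - D k l) ^ 2 * T i k * T j l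

noncomputable def colSum {N n : ℕ} (T : Matrix (Fin N) (Fin n) ℝ) (k : Fin n) : ℝ :=
  ∑ i, T i k

noncomputable def CbarOf {N n : ℕ} (C : Matrix (Fin N) (Fin N) ℝ)
    (T : Matrix (Fin N) (Fin n) ℝ) : Matrix (Fin n) (Fin n) ℝ :=
  Matrix.of fun k l =>
    if 0 < colSum T k * colSum T l then
      (∑ i, ∑ j, T i k * C i j * T j l) / (colSum T k * colSum T l)
    else 0

/-! ### Auxiliary machinery -/

private lemma sum_reorder4 {A A' B B' : Type*} [Fintype A] [Fintype A'] [Fintype B] [Fintype B']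
    (f : A → A' → B → B' → ℝ) :
    ∑ i, ∑ j, ∑ k, ∑ l, f i j k l = ∑ k, ∑ l, ∑ i, ∑ j, f i j k l := by
  conv_lhs => enter [2, i]; rw [Finset.sum_comm]
  rw [Finset.sum_comm]
  conv_lhs => enter [2, k, 2, i]; rw [Finset.sum_comm]
  conv_lhs => enter [2, k]; rw [Finset.sum_comm]

private lemma sum_reorder6 {A K : Type*} [Fintype A] [Fintype K]
    (f : A → A → A → A → K → K → ℝ) :
    ∑ p1, ∑ p2, ∑ q1, ∑ q2, ∑ k, ∑ l, f p1 p2 q1 q2 k l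
      = ∑ k, ∑ l, ∑ p1, ∑ q1, ∑ p2, ∑ q2, f p1 p2 q1 q2 k l := by
  conv_lhs => enter [2, p1, 2, p2, 2, q1]; rw [Finset.sum_comm]
  conv_lhs => enter [2, p1, 2, p2]; rw [Finset.sum_comm]
  conv_lhs => enter [2, p1]; rw [Finset.sum_comm]
  rw [Finset.sum_comm]
  conv_lhs => enter [2, k, 2, p1, 2, p2, 2, q1]; rw [Finset.sum_comm]
  conv_lhs => enter [2, k, 2, p1, 2, p2]; rw [Finset.sum_comm]
  conv_lhs => enter [2, k, 2, p1]; rw [Finset.sum_comm]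
  conv_lhs => enter [2, k]; rw [Finset.sum_comm]
  conv_lhs => enter [2, k, 2, l, 2, p1]; rw [Finset.sum_comm]

/-- The quadratic functional `g`. -/
noncomputable def gfun {N : ℕ} (C : Matrix (Fin N) (Fin N) ℝ)
    (U : Matrix (Fin N) (Fin N) ℝ) : ℝ :=
  ∑ p : Fin N × Fin N, ∑ q : Fin N × Fin N, U p.1 p.2 * (C ⊗ₖ C) p q * U q.1 q.2

lemma gquad {N : ℕ} (C : Matrix (Fin N) (Fin N) ℝ) {K : Type*} [Fintype K]
    (c : K → ℝ) (x : K → Fin N → ℝ) :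
    gfun C (Matrix.of fun i j => ∑ k, c k * x k i * x k j) =
      ∑ k, ∑ l, c k * c l * (∑ i, ∑ j, x k i * C i j * x l j) ^ 2 := by
  simp only [gfun, Fintype.sum_prod_type, kroneckerMap_apply, Matrix.of_apply, pow_two]
  simp only [Finset.sum_mul, Finset.mul_sum]
  rw [sum_reorder6 (fun p1 p2 q1 q2 a b =>
    c b * x b p1 * x b p2 * (C p1 q1 * C p2 q2) * (c a * x a q1 * x a q2))]
  rw [Finset.sum_comm]
  refine Finset.sum_congr rfl fun k _ => Finset.sum_congr rfl fun l _ => ?_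
  refine Finset.sum_congr rfl fun p1 _ => Finset.sum_congr rfl fun q1 _ =>
    Finset.sum_congr rfl fun p2 _ => Finset.sum_congr rfl fun q2 _ => ?_
  ring

/-- The reduced functional `f`. -/
noncomputable def fval {N n : ℕ} (C : Matrix (Fin N) (Fin N) ℝ)
    (T : Matrix (Fin N) (Fin n) ℝ) : ℝ :=
  ∑ k, ∑ l, 1 / colSum T k * (1 / colSum T l) * (∑ i, ∑ j, T i k * C i j * T j l) ^ 2

/-- The coupling `U(T) = T diag(h̄)⁻¹ Tᵀ`. -/
noncomputable def Uof {N n : ℕ} (T : Matrix (Fin N) (Fin n) ℝ) :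
    Matrix (Fin N) (Fin N) ℝ :=
  Matrix.of fun i j => ∑ k, 1 / colSum T k * T i k * T j k

lemma gfun_Uof {N n : ℕ} (C : Matrix (Fin N) (Fin N) ℝ) (T : Matrix (Fin N) (Fin n) ℝ) :
    gfun C (Uof T) = fval C T :=
  gquad C (fun k => 1 / colSum T k) (fun k i => T i k)

lemma Uof_mem {N n : ℕ} (h : Fin N → ℝ) (T : Matrix (Fin N) (Fin n) ℝ)
    (hT : ∀ i j, 0 ≤ T i j) (hrow : ∀ i, ∑ k, T i k = h i) (hcol : ∀ k, 0 < colSum T k) :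
    (∀ i j, 0 ≤ Uof T i j) ∧ (∀ i, ∑ j, Uof T i j = h i) ∧ ∀ j, ∑ i, Uof T i j = h j := by
  have hUapp : ∀ i j, Uof T i j = ∑ k, 1 / colSum T k * T i k * T j k := fun i j => rfl
  refine ⟨fun i j => ?_, fun i => ?_, fun j => ?_⟩
  · rw [hUapp]
    refine Finset.sum_nonneg fun k _ => ?_
    have := (hcol k).le
    have h1 := hT i k
    have h2 := hT j k
    positivity
  · simp only [hUapp]
    rw [Finset.sum_comm]
    have e : ∀ k : Fin n, ∑ j, 1 / colSum T k * T i k * T j k = T i k := by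
      intro k
      rw [← Finset.mul_sum]
      have hc : (∑ j, T j k) = colSum T k := rfl
      rw [hc]
      field_simp
      rw [mul_comm, mul_div_cancel_right₀ _ (hcol k).ne']
    simp only [e]
    exact hrow i
  · simp only [hUapp]
    rw [Finset.sum_comm]
    have e : ∀ k : Fin n, ∑ i, 1 / colSum T k * T i k * T j k = T j k := by
      intro k
      have e2 : ∀ i, 1 / colSum T k * T i k * T j k = 1 / colSum T k * T j k * T i k :=
        fun i => by ring
      simp only [e2]
      rw [← Finset.mul_sum]
      have hc : (∑ i, T i k) = colSum T k := rfl
      rw [hc]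
      field_simp
      rw [mul_comm, mul_div_cancel_right₀ _ (hcol k).ne']
    simp only [e]
    exact hrow j

/-- Expansion of the reduced GW energy. -/
lemma energy_eq {N n : ℕ} (C : Matrix (Fin N) (Fin N) ℝ) (h : Fin N → ℝ)
    (T : Matrix (Fin N) (Fin n) ℝ)
    (hrow : ∀ i, ∑ k, T i k = h i) (hcol : ∀ k, 0 < colSum T k) :
    GWEnergy C (CbarOf C T) T
      = (∑ i, ∑ j, C i j ^ 2 * h i * h j) - fval C T := by
  have h1 : GWEnergy C (CbarOf C T) T
      = ∑ k, ∑ l, ∑ i, ∑ j, (C i j - CbarOf C T k l) ^ 2 * T i k * T j l :=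
    sum_reorder4 _
  rw [h1]
  have h2 : ∀ k l, ∑ i, ∑ j, (C i j - CbarOf C T k l) ^ 2 * T i k * T j l
      = (∑ i, ∑ j, C i j ^ 2 * T i k * T j l)
        - 1 / colSum T k * (1 / colSum T l) * (∑ i, ∑ j, T i k * C i j * T j l) ^ 2 := by
    intro k l
    have hα := hcol k
    have hβ := hcol l
    have hd : CbarOf C T k l
        = (∑ i, ∑ j, T i k * C i j * T j l) / (colSum T k * colSum T l) := by
      simp only [CbarOf, Matrix.of_apply, if_pos (mul_pos hα hβ)]
    have hY : ∑ i, ∑ j, 2 * CbarOf C T k l * (T i k * C i j * T j l)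
        = 2 * CbarOf C T k l * ∑ i, ∑ j, T i k * C i j * T j l := by
      simp only [← Finset.mul_sum]
    have hZ : ∑ i, ∑ j, CbarOf C T k l ^ 2 * (T i k * T j l)
        = CbarOf C T k l ^ 2 * (colSum T k * colSum T l) := by
      simp only [← Finset.mul_sum]
      rw [← Finset.sum_mul]
      rfl
    calc ∑ i, ∑ j, (C i j - CbarOf C T k l) ^ 2 * T i k * T j l
        = ∑ i, ∑ j, (C i j ^ 2 * T i k * T j l
            - 2 * CbarOf C T k l * (T i k * C i j * T j l)
            + CbarOf C T k l ^ 2 * (T i k * T j l)) :=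
          Finset.sum_congr rfl fun i _ => Finset.sum_congr rfl fun j _ => by ring
      _ = (∑ i, ∑ j, C i j ^ 2 * T i k * T j l)
            - (∑ i, ∑ j, 2 * CbarOf C T k l * (T i k * C i j * T j l))
            + ∑ i, ∑ j, CbarOf C T k l ^ 2 * (T i k * T j l) := by
          simp only [Finset.sum_add_distrib, Finset.sum_sub_distrib]
      _ = (∑ i, ∑ j, C i j ^ 2 * T i k * T j l)
            - 1 / colSum T k * (1 / colSum T l)
              * (∑ i, ∑ j, T i k * C i j * T j l) ^ 2 := by
          rw [hY, hZ, hd]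
          field_simp
          ring
  simp only [h2]
  simp only [Finset.sum_sub_distrib]
  have hL : ∑ k : Fin n, ∑ l : Fin n, ∑ i, ∑ j, C i j ^ 2 * T i k * T j l
      = ∑ i, ∑ j, C i j ^ 2 * h i * h j := by
    rw [sum_reorder4 (fun k l i j => C i j ^ 2 * T i k * T j l)]
    refine Finset.sum_congr rfl fun i _ => Finset.sum_congr rfl fun j _ => ?_
    have e1 : ∀ k : Fin n, ∑ l, C i j ^ 2 * T i k * T j l
        = C i j ^ 2 * T i k * (∑ l, T j l) := fun k => (Finset.mul_sum _ _ _).symm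
    simp only [e1, hrow j]
    have e2 : ∀ k : Fin n, C i j ^ 2 * T i k * h j = T i k * (C i j ^ 2 * h j) :=
      fun k => by ring
    simp only [e2]
    rw [← Finset.sum_mul, hrow i]
    ring
  rw [hL]
  rfl

private lemma combo_pos {a b α β : ℝ} (ha : 0 ≤ a) (hb : 0 ≤ b) (hab : a + b = 1)
    (hα : 0 < α) (hβ : 0 < β) : 0 < a * α + b * β := by
  rcases ha.lt_or_eq with ha' | ha'
  · exact add_pos_of_pos_of_nonneg (mul_pos ha' hα) (mul_nonneg hb hβ.le)
  · have hb1 : b = 1 := by linarith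
    simpa [← ha', hb1] using hβ

/-- Scalar key identity (matrix quadratic-over-linear convexity, rank-one form). -/
private lemma keyid (a b α β x1 y1 x2 y2 : ℝ) (hα : α ≠ 0) (hβ : β ≠ 0)
    (hs : a * α + b * β ≠ 0) :
    a * (1 / α * x1 * y1) + b * (1 / β * x2 * y2)
      = 1 / (a * α + b * β) * (a * x1 + b * x2) * (a * y1 + b * y2)
        + a * b / (α * β * (a * α + b * β)) * (α * x2 - β * x1) * (α * y2 - β * y1) := by
  field_simp
  ring

theorem reduced_energy_concaveOn_interior {N n : ℕ}
    (C : Matrix (Fin N) (Fin N) ℝ) (h : Fin N → ℝ)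
    (hpos : ∀ i, 0 < h i) (hsum : ∑ i, h i = 1)
    (hconv : ConvexOn ℝ
      {U : Matrix (Fin N) (Fin N) ℝ |
        (∀ i j, 0 ≤ U i j) ∧ (∀ i, ∑ j, U i j = h i) ∧ ∀ j, ∑ i, U i j = h j}
      (fun U => ∑ p : Fin N × Fin N, ∑ q : Fin N × Fin N,
        U p.1 p.2 * (C ⊗ₖ C) p q * U q.1 q.2)) :
    ConcaveOn ℝ
      {T : Matrix (Fin N) (Fin n) ℝ |
        (∀ i j, 0 ≤ T i j) ∧ (∀ i, ∑ j, T i j = h i) ∧ ∀ k, 0 < colSum T k}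
      (fun T => GWEnergy C (CbarOf C T) T) := by
  set S := {T : Matrix (Fin N) (Fin n) ℝ |
      (∀ i j, 0 ≤ T i j) ∧ (∀ i, ∑ j, T i j = h i) ∧ ∀ k, 0 < colSum T k} with hS
  -- entries and column sums of convex combinations
  have hentry : ∀ (T₁ T₂ : Matrix (Fin N) (Fin n) ℝ) (a b : ℝ) (i : Fin N) (k : Fin n),
      (a • T₁ + b • T₂) i k = a * T₁ i k + b * T₂ i k := by
    intro T₁ T₂ a b i k
    simp [Matrix.add_apply, Matrix.smul_apply, smul_eq_mul]
  have hcolSum : ∀ (T₁ T₂ : Matrix (Fin N) (Fin n) ℝ) (a b : ℝ) (k : Fin n),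
      colSum (a • T₁ + b • T₂) k = a * colSum T₁ k + b * colSum T₂ k := by
    intro T₁ T₂ a b k
    simp only [colSum, hentry, Finset.sum_add_distrib, Finset.mul_sum]
  -- convexity of S
  have hSconv : Convex ℝ S := by
    intro T₁ h₁ T₂ h₂ a b ha hb hab
    obtain ⟨h₁n, h₁r, h₁c⟩ := h₁
    obtain ⟨h₂n, h₂r, h₂c⟩ := h₂
    refine ⟨fun i k => ?_, fun i => ?_, fun k => ?_⟩
    · rw [hentry]
      have := h₁n i k; have := h₂n i k
      positivity
    · simp only [hentry, Finset.sum_add_distrib, ← Finset.mul_sum, h₁r i, h₂r i]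
      nlinarith [hpos i]
    · rw [hcolSum]
      exact combo_pos ha hb hab (h₁c k) (h₂c k)
  refine ⟨hSconv, ?_⟩
  intro T₁ h₁ T₂ h₂ a b ha hb hab
  have hTmem : (a • T₁ + b • T₂) ∈ S := hSconv h₁ h₂ ha hb hab
  obtain ⟨h₁n, h₁r, h₁c⟩ := h₁
  obtain ⟨h₂n, h₂r, h₂c⟩ := h₂
  obtain ⟨hTn, hTr, hTc⟩ := hTmem
  -- the couplings
  have hU₁ := Uof_mem h T₁ h₁n h₁r h₁c
  have hU₂ := Uof_mem h T₂ h₂n h₂r h₂c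
  have hg : gfun C (a • Uof T₁ + b • Uof T₂)
      ≤ a • gfun C (Uof T₁) + b • gfun C (Uof T₂) := hconv.2 hU₁ hU₂ ha hb hab
  rw [gfun_Uof, gfun_Uof, smul_eq_mul, smul_eq_mul] at hg
  -- the rank-one decomposition of the combined coupling
  set cc : Fin n ⊕ Fin n → ℝ := Sum.elim
    (fun k => 1 / colSum (a • T₁ + b • T₂) k)
    (fun k => a * b / (colSum T₁ k * colSum T₂ k * colSum (a • T₁ + b • T₂) k)) with hcc
  set xx : Fin n ⊕ Fin n → Fin N → ℝ := Sum.elim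
    (fun k i => (a • T₁ + b • T₂) i k)
    (fun k i => colSum T₁ k * T₂ i k - colSum T₂ k * T₁ i k) with hxx
  have hdec : a • Uof T₁ + b • Uof T₂
      = Matrix.of fun i j => ∑ k : Fin n ⊕ Fin n, cc k * xx k i * xx k j := by
    ext i j
    simp only [Matrix.add_apply, Matrix.smul_apply, smul_eq_mul, Uof, Matrix.of_apply,
      hcc, hxx, Fintype.sum_sum_type, Sum.elim_inl, Sum.elim_inr]
    simp only [Finset.mul_sum]
    rw [← Finset.sum_add_distrib, ← Finset.sum_add_distrib]
    refine Finset.sum_congr rfl fun k _ => ?_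
    have hα := h₁c k
    have hβ := h₂c k
    have hs : 0 < a * colSum T₁ k + b * colSum T₂ k := combo_pos ha hb hab hα hβ
    simp only [hentry, hcolSum]
    exact keyid a b (colSum T₁ k) (colSum T₂ k) (T₁ i k) (T₁ j k) (T₂ i k) (T₂ j k)
      hα.ne' hβ.ne' hs.ne'
  -- the key inequality
  have hccnn : ∀ p, 0 ≤ cc p := by
    intro p
    rcases p with k | k
    · simp only [hcc, Sum.elim_inl]
      have := hTc k
      positivity
    · simp only [hcc, Sum.elim_inr]
      have := h₁c k
      have := h₂c k
      have := hTc k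
      positivity
  have hFnn : ∀ p q : Fin n ⊕ Fin n,
      0 ≤ cc p * cc q * (∑ i, ∑ j, xx p i * C i j * xx q j) ^ 2 :=
    fun p q => mul_nonneg (mul_nonneg (hccnn p) (hccnn q)) (sq_nonneg _)
  have hle : fval C (a • T₁ + b • T₂) ≤ gfun C (a • Uof T₁ + b • Uof T₂) := by
    rw [hdec, gquad C cc xx]
    calc fval C (a • T₁ + b • T₂)
        = ∑ k : Fin n, ∑ l : Fin n,
            cc (Sum.inl k) * cc (Sum.inl l)
              * (∑ i, ∑ j, xx (Sum.inl k) i * C i j * xx (Sum.inl l) j) ^ 2 := rfl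
      _ ≤ ∑ k : Fin n, ∑ q : Fin n ⊕ Fin n,
            cc (Sum.inl k) * cc q * (∑ i, ∑ j, xx (Sum.inl k) i * C i j * xx q j) ^ 2 := by
          refine Finset.sum_le_sum fun k _ => ?_
          rw [Fintype.sum_sum_type]
          exact le_add_of_nonneg_right (Finset.sum_nonneg fun l _ => hFnn _ _)
      _ ≤ ∑ p : Fin n ⊕ Fin n, ∑ q : Fin n ⊕ Fin n,
            cc p * cc q * (∑ i, ∑ j, xx p i * C i j * xx q j) ^ 2 := by
          rw [Fintype.sum_sum_type]
          exact le_add_of_nonneg_right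
            (Finset.sum_nonneg fun k _ => Finset.sum_nonneg fun q _ => hFnn _ _)
  have hkey : fval C (a • T₁ + b • T₂) ≤ a * fval C T₁ + b * fval C T₂ := hle.trans hg
  -- conclude
  simp only [smul_eq_mul]
  rw [energy_eq C h T₁ h₁r h₁c, energy_eq C h T₂ h₂r h₂c,
    energy_eq C h (a • T₁ + b • T₂) hTr hTc]
  set K0 := ∑ i, ∑ j, C i j ^ 2 * h i * h j with hK0
  have hid : a * (K0 - fval C T₁) + b * (K0 - fval C T₂)
      = K0 - (a * fval C T₁ + b * fval C T₂) := by linear_combination K0 * hab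
  linarith
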